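/- Fix positive integers $R_1, R_2, R_3, R_4$ and let $M \in \mathbb{R}^{(R_4 R_1 \cdot R_2 R_3) \times (R_1 R_2 \cdot R_3 R_4)}$ be defined on paired indices by $M(((p_1,q_1),(p_3,q_3)), ((p_2,q_2),(p_4,q_4))) = \delta_{q_1,p_2}\,\delta_{q_2,p_3}\,\delta_{q_3,p_4}\,\delta_{q_4,p_1}$, where $1 \le p_s, \text{resp. } q_s$, range over appropriate sets of sizes $R_{s-1}$ and $R_s$ (indices mod 4). Then $\mathrm{rank}(M) = R_1 R_2 R_3 R_4$. -/

import Mathlib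

/-- The matrix `M(((p₁,q₁),(p₃,q₃)),((p₂,q₂),(p₄,q₄))) = δ_{q₁,p₂} δ_{q₂,p₃} δ_{q₃,p₄} δ_{q₄,p₁}`
has rank `R₁ R₂ R₃ R₄`. -/
theorem rank_kronecker_delta_quadruple (R1 R2 R3 R4 : ℕ)
    (hR1 : 0 < R1) (hR2 : 0 < R2) (hR3 : 0 < R3) (hR4 : 0 < R4)
    (M : Matrix (Fin R4 × Fin R1 × Fin R2 × Fin R3)
                (Fin R1 × Fin R2 × Fin R3 × Fin R4) ℝ)
    (hM : ∀ (p1 : Fin R4) (q1 : Fin R1) (p3 : Fin R2) (q3 : Fin R3)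
          (p2 : Fin R1) (q2 : Fin R2) (p4 : Fin R3) (q4 : Fin R4),
      M (p1, q1, p3, q3) (p2, q2, p4, q4) =
        (if q1 = p2 then (1 : ℝ) else 0) * (if q2 = p3 then (1 : ℝ) else 0) *
        (if q3 = p4 then (1 : ℝ) else 0) * (if q4 = p1 then (1 : ℝ) else 0)) :
    M.rank = R1 * R2 * R3 * R4 := by
  let e : (Fin R4 × Fin R1 × Fin R2 × Fin R3) ≃ (Fin R1 × Fin R2 × Fin R3 × Fin R4) :=
    { toFun := fun x => (x.2.1, x.2.2.1, x.2.2.2, x.1)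
      invFun := fun y => (y.2.2.2, y.1, y.2.1, y.2.2.1)
      left_inv := fun x => rfl
      right_inv := fun y => rfl }
  have hMeq : M = (1 : Matrix (Fin R1 × Fin R2 × Fin R3 × Fin R4)
      (Fin R1 × Fin R2 × Fin R3 × Fin R4) ℝ).submatrix e id := by
    ext ⟨p1, q1, p3, q3⟩ ⟨p2, q2, p4, q4⟩
    rw [hM]
    simp only [Matrix.submatrix_apply, id, Matrix.one_apply, e, Equiv.coe_fn_mk,
      Prod.mk.injEq]
    by_cases h1 : q1 = p2 <;> by_cases h2 : q2 = p3 <;> by_cases h3 : q3 = p4 <;>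
      by_cases h4 : q4 = p1 <;>
      simp [h1, h2, h3, h4, @eq_comm _ p3, @eq_comm _ p1]
  rw [hMeq]
  rw [Matrix.rank, show ((id : (Fin R1 × Fin R2 × Fin R3 × Fin R4) →
      (Fin R1 × Fin R2 × Fin R3 × Fin R4))) = ⇑(Equiv.refl _) from rfl,
    Matrix.mulVecLin_submatrix, LinearMap.range_comp, LinearMap.range_comp,
    show LinearMap.funLeft ℝ ℝ ⇑e = (LinearEquiv.funCongrLeft ℝ ℝ e : _ →ₗ[ℝ] _) from rfl]
  rw [LinearEquiv.finrank_map_eq]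
  simp only [Equiv.refl_symm, Equiv.coe_refl, LinearMap.funLeft_id, LinearMap.range_comp,
    LinearMap.range_id, Submodule.map_top]
  rw [Matrix.mulVecLin_one]; change Module.finrank ℝ ↥(Submodule.map LinearMap.id (LinearMap.funLeft ℝ ℝ (id : (Fin R1 × Fin R2 × Fin R3 × Fin R4) → _)).range) = _; rw [Submodule.map_id,
    show LinearMap.funLeft ℝ ℝ (id : (Fin R1 × Fin R2 × Fin R3 × Fin R4) → _) = LinearMap.id from rfl,
    LinearMap.range_id, finrank_top, Module.finrank_pi, Fintype.card_prod,
    Fintype.card_prod, Fintype.card_prod, Fintype.card_fin, Fintype.card_fin,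
    Fintype.card_fin, Fintype.card_fin, mul_assoc, mul_assoc]
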